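/- Under the hypotheses of the invariance theorem (x(0) in the invariant equi-topology neighborhood of an equilibrium z), the trajectory x(t) converges as t → ∞ to fvct(x(0)) = lim_{t→∞} A(x(0))^t x(0). -/

import Mathlib

open Filter Matrix Finset

open Filter Matrix Finset

/-- Averaging adjacency matrix of the proximity digraph with bound function `B`
(`B i j = r i` for SBC, `B i j = r j` for SBI). -/
noncomputable def adjMat {n : ℕ} (B : Fin n → Fin n → ℝ) (y : Fin n → ℝ) :
    Matrix (Fin n) (Fin n) ℝ :=
  Matrix.of fun i j =>
    if |y i - y j| ≤ B i j
    then ((Finset.univ.filter (fun k => |y i - y k| ≤ B i k)).card : ℝ)⁻¹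
    else 0

/-- Equi-topology distance `ε`. -/
noncomputable def epsDist {n : ℕ} (r z : Fin n → ℝ) (i : Fin n) : ℝ :=
  (1 / 2) * sInf {d : ℝ | ∃ j, j ≠ i ∧
    (d = |(|z i - z j| - r i)| ∨ d = |(|z i - z j| - r j)|)}

/-- Invariant equi-topology distance `δ i = min { ε j : j a predecessor of i in G_r(z) }`. -/
noncomputable def deltaDist {n : ℕ} (r : Fin n → ℝ) (B : Fin n → Fin n → ℝ)
    (z : Fin n → ℝ) (i : Fin n) : ℝ :=
  sInf {d : ℝ | ∃ j, Relation.ReflTransGen (fun a b => |z a - z b| ≤ B a b) j i ∧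
    d = epsDist r z j}

section Aux

variable {n : ℕ}

lemma adjMat_apply (B : Fin n → Fin n → ℝ) (y : Fin n → ℝ) (i j : Fin n) :
    adjMat B y i j = if |y i - y j| ≤ B i j
      then ((Finset.univ.filter (fun k => |y i - y k| ≤ B i k)).card : ℝ)⁻¹ else 0 := rfl

lemma adjMat_nonneg (B : Fin n → Fin n → ℝ) (y : Fin n → ℝ) (i j : Fin n) :
    0 ≤ adjMat B y i j := by
  rw [adjMat_apply]
  split
  · positivity
  · exact le_refl 0

lemma mem_nbr {B : Fin n → Fin n → ℝ} {y : Fin n → ℝ} {i : Fin n} (hBi : 0 < B i i) :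
    i ∈ Finset.univ.filter (fun k => |y i - y k| ≤ B i k) := by
  simp only [Finset.mem_filter, Finset.mem_univ, true_and, sub_self, abs_zero]
  exact le_of_lt hBi

lemma nbr_card_pos {B : Fin n → Fin n → ℝ} {y : Fin n → ℝ} {i : Fin n} (hBi : 0 < B i i) :
    (0 : ℝ) < ((Finset.univ.filter (fun k => |y i - y k| ≤ B i k)).card : ℝ) := by
  have := Finset.card_pos.mpr ⟨i, mem_nbr (y := y) hBi⟩
  exact_mod_cast this

lemma adjMat_row_sum {B : Fin n → Fin n → ℝ} (hBd : ∀ i, 0 < B i i) (y : Fin n → ℝ)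
    (i : Fin n) : ∑ j, adjMat B y i j = 1 := by
  classical
  have h1 : ∑ j, adjMat B y i j
      = ∑ j ∈ Finset.univ.filter (fun k => |y i - y k| ≤ B i k),
          ((Finset.univ.filter (fun k => |y i - y k| ≤ B i k)).card : ℝ)⁻¹ := by
    rw [Finset.sum_filter]
    exact Finset.sum_congr rfl fun j _ => rfl
  rw [h1, Finset.sum_const, nsmul_eq_mul, mul_inv_cancel₀]
  exact ne_of_gt (nbr_card_pos (hBd i))

lemma adjMat_diag_pos {B : Fin n → Fin n → ℝ} (hBd : ∀ i, 0 < B i i) (y : Fin n → ℝ)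
    (i : Fin n) : 0 < adjMat B y i i := by
  rw [adjMat_apply, if_pos (by simpa using le_of_lt (hBd i))]
  exact inv_pos.mpr (nbr_card_pos (hBd i))

lemma adjMat_congr {B : Fin n → Fin n → ℝ} {y w : Fin n → ℝ}
    (h : ∀ i j, |y i - y j| ≤ B i j ↔ |w i - w j| ≤ B i j) :
    adjMat B y = adjMat B w := by
  ext i j
  have hf : (Finset.univ.filter (fun k => |y i - y k| ≤ B i k))
      = Finset.univ.filter (fun k => |w i - w k| ≤ B i k) := by
    apply Finset.filter_congr
    intro k _
    simp [h i k]
  rw [adjMat_apply, adjMat_apply, hf]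
  by_cases hc : |w i - w j| ≤ B i j
  · rw [if_pos ((h i j).mpr hc), if_pos hc]
  · rw [if_neg (fun hy => hc ((h i j).mp hy)), if_neg hc]

lemma epsDist_nonneg (r z : Fin n → ℝ) (i : Fin n) : 0 ≤ epsDist r z i := by
  unfold epsDist
  have h : 0 ≤ sInf {d : ℝ | ∃ j, j ≠ i ∧
      (d = |(|z i - z j| - r i)| ∨ d = |(|z i - z j| - r j)|)} := by
    apply Real.sInf_nonneg
    rintro d ⟨j, -, h | h⟩ <;> rw [h] <;> exact abs_nonneg _
  linarith

lemma epsSet_bddBelow (r z : Fin n → ℝ) (i : Fin n) :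
    BddBelow {d : ℝ | ∃ j, j ≠ i ∧
      (d = |(|z i - z j| - r i)| ∨ d = |(|z i - z j| - r j)|)} := by
  refine ⟨0, ?_⟩
  rintro d ⟨j, -, h | h⟩ <;> rw [h] <;> exact abs_nonneg _

/-- gap lemma: `2 ε_i ≤ | |z i - z j| - B i j |` for `j ≠ i`. -/
lemma two_eps_le_gap {r : Fin n → ℝ} {B : Fin n → Fin n → ℝ}
    (hB : (∀ i j, B i j = r i) ∨ (∀ i j, B i j = r j)) (z : Fin n → ℝ)
    {i j : Fin n} (hij : j ≠ i) :
    2 * epsDist r z i ≤ |(|z i - z j| - B i j)| := by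
  have hmem : |(|z i - z j| - B i j)| ∈ {d : ℝ | ∃ j', j' ≠ i ∧
      (d = |(|z i - z j'| - r i)| ∨ d = |(|z i - z j'| - r j')|)} := by
    rcases hB with hB | hB
    · exact ⟨j, hij, Or.inl (by rw [hB i j])⟩
    · exact ⟨j, hij, Or.inr (by rw [hB i j])⟩
  have := csInf_le (epsSet_bddBelow r z i) hmem
  unfold epsDist
  linarith

lemma deltaSet_bddBelow (r : Fin n → ℝ) (B : Fin n → Fin n → ℝ) (z : Fin n → ℝ) (i : Fin n) :
    BddBelow {d : ℝ | ∃ j, Relation.ReflTransGen (fun a b => |z a - z b| ≤ B a b) j i ∧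
      d = epsDist r z j} := by
  refine ⟨0, ?_⟩
  rintro d ⟨j, -, rfl⟩
  exact epsDist_nonneg r z j

lemma deltaDist_nonneg (r : Fin n → ℝ) (B : Fin n → Fin n → ℝ) (z : Fin n → ℝ) (i : Fin n) :
    0 ≤ deltaDist r B z i := by
  apply Real.sInf_nonneg
  rintro d ⟨j, -, rfl⟩
  exact epsDist_nonneg r z j

lemma deltaDist_le_eps (r : Fin n → ℝ) (B : Fin n → Fin n → ℝ) (z : Fin n → ℝ) (i : Fin n) :
    deltaDist r B z i ≤ epsDist r z i :=
  csInf_le (deltaSet_bddBelow r B z i) ⟨i, Relation.ReflTransGen.refl, rfl⟩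

lemma deltaDist_mono {r : Fin n → ℝ} {B : Fin n → Fin n → ℝ} {z : Fin n → ℝ} {i k : Fin n}
    (hik : |z i - z k| ≤ B i k) : deltaDist r B z k ≤ deltaDist r B z i := by
  have hne : Set.Nonempty {d : ℝ | ∃ j, Relation.ReflTransGen
      (fun a b => |z a - z b| ≤ B a b) j i ∧ d = epsDist r z j} :=
    ⟨epsDist r z i, i, Relation.ReflTransGen.refl, rfl⟩
  apply csInf_le_csInf (deltaSet_bddBelow r B z k) hne
  rintro d ⟨j, hj, rfl⟩
  exact ⟨j, hj.tail hik, rfl⟩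

/-- The invariant equi-topology neighborhood condition. -/
def Pnbhd (r : Fin n → ℝ) (B : Fin n → Fin n → ℝ) (z y : Fin n → ℝ) : Prop :=
  ∀ i, (0 < deltaDist r B z i → |y i - z i| < deltaDist r B z i) ∧
       (deltaDist r B z i = 0 → y i = z i)

lemma Pnbhd.dist_le {r : Fin n → ℝ} {B : Fin n → Fin n → ℝ} {z y : Fin n → ℝ}
    (hy : Pnbhd r B z y) (i : Fin n) : |y i - z i| ≤ deltaDist r B z i := by
  rcases lt_or_eq_of_le (deltaDist_nonneg r B z i) with h | h
  · exact le_of_lt ((hy i).1 h)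
  · rw [← h, (hy i).2 h.symm]
    simp

/-- Graph equality on the invariant neighborhood. -/
lemma graph_eq {r : Fin n → ℝ} {B : Fin n → Fin n → ℝ} {z y : Fin n → ℝ}
    (hB : (∀ i j, B i j = r i) ∨ (∀ i j, B i j = r j))
    (hy : Pnbhd r B z y) (i j : Fin n) :
    |y i - y j| ≤ B i j ↔ |z i - z j| ≤ B i j := by
  by_cases hij : i = j
  · subst hij; simp
  have hji : j ≠ i := fun h => hij h.symm
  set g := |(|z i - z j| - B i j)| with hg
  have hgi : 2 * epsDist r z i ≤ g := two_eps_le_gap hB z hji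
  have hgj : 2 * epsDist r z j ≤ g := by
    have hmem : g ∈ {d : ℝ | ∃ j', j' ≠ j ∧
        (d = |(|z j - z j'| - r j)| ∨ d = |(|z j - z j'| - r j')|)} := by
      rcases hB with hB' | hB'
      · exact ⟨i, hij, Or.inr (by rw [hg, hB' i j, abs_sub_comm (z j) (z i)])⟩
      · exact ⟨i, hij, Or.inl (by rw [hg, hB' i j, abs_sub_comm (z j) (z i)])⟩
    have := csInf_le (epsSet_bddBelow r z j) hmem
    unfold epsDist
    linarith
  have hdi := deltaDist_le_eps r B z i
  have hdj := deltaDist_le_eps r B z j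
  by_cases hg0 : g = 0
  · have hei : epsDist r z i = 0 :=
      le_antisymm (by linarith [epsDist_nonneg r z i]) (epsDist_nonneg r z i)
    have hej : epsDist r z j = 0 :=
      le_antisymm (by linarith [epsDist_nonneg r z j]) (epsDist_nonneg r z j)
    have hdi0 : deltaDist r B z i = 0 :=
      le_antisymm (by linarith) (deltaDist_nonneg r B z i)
    have hdj0 : deltaDist r B z j = 0 :=
      le_antisymm (by linarith) (deltaDist_nonneg r B z j)
    rw [(hy i).2 hdi0, (hy j).2 hdj0]
  · have hgpos : 0 < g := lt_of_le_of_ne (abs_nonneg _) (Ne.symm hg0)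
    have hpert : |y i - z i| + |y j - z j| < g := by
      have h1 := hy.dist_le i
      have h2 := hy.dist_le j
      rcases lt_or_eq_of_le (deltaDist_nonneg r B z i) with hdi0 | hdi0
      · have hs1 : |y i - z i| < deltaDist r B z i := (hy i).1 hdi0
        linarith
      · have hz1 : |y i - z i| = 0 := by rw [(hy i).2 hdi0.symm]; simp
        rcases lt_or_eq_of_le (deltaDist_nonneg r B z j) with hdj0 | hdj0
        · have hs2 : |y j - z j| < deltaDist r B z j := (hy j).1 hdj0
          linarith
        · have hz2 : |y j - z j| = 0 := by rw [(hy j).2 hdj0.symm]; simp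
          linarith
    have hkey : |(|y i - y j| - |z i - z j|)| < g := by
      have e1 : |(|y i - y j| - |z i - z j|)| ≤ |(y i - y j) - (z i - z j)| :=
        abs_abs_sub_abs_le_abs_sub _ _
      have e2 : (y i - y j) - (z i - z j) = (y i - z i) - (y j - z j) := by ring
      have e3 : |(y i - z i) - (y j - z j)| ≤ |y i - z i| + |y j - z j| := abs_sub _ _
      rw [e2] at e1
      linarith
    rcases abs_lt.mp hkey with ⟨hk1, hk2⟩
    by_cases hzle : |z i - z j| ≤ B i j
    · have hne : |z i - z j| ≠ B i j := by
        intro h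
        exact hg0 (by rw [hg, h, sub_self, abs_zero])
      have hlt : |z i - z j| < B i j := lt_of_le_of_ne hzle hne
      have hgval : g = B i j - |z i - z j| := by
        rw [hg, abs_of_neg (by linarith)]
        ring
      exact iff_of_true (by linarith) hzle
    · push_neg at hzle
      have hgval : g = |z i - z j| - B i j := by
        rw [hg, abs_of_pos (by linarith)]
      exact iff_of_false (by push_neg; linarith) (by push_neg; linarith)

end Aux

lemma Pnbhd.step {r : Fin n → ℝ} {B : Fin n → Fin n → ℝ} {z y : Fin n → ℝ}
    (hr : ∀ i, 0 < r i)
    (hB : (∀ i j, B i j = r i) ∨ (∀ i j, B i j = r j))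
    (heq : adjMat B z *ᵥ z = z)
    (hy : Pnbhd r B z y) : Pnbhd r B z (adjMat B y *ᵥ y) := by
  have hBd : ∀ i, 0 < B i i := by
    rcases hB with h | h <;> intro i <;> rw [h i i] <;> exact hr i
  have hA : adjMat B y = adjMat B z := adjMat_congr (graph_eq hB hy)
  rw [hA]
  set A := adjMat B z with hAdef
  intro i
  have hdiff : (A *ᵥ y) i - z i = ∑ j, A i j * (y j - z j) := by
    have hz : (A *ᵥ z) i = z i := by rw [heq]
    calc (A *ᵥ y) i - z i = (A *ᵥ y) i - (A *ᵥ z) i := by rw [hz]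
    _ = ∑ j, A i j * y j - ∑ j, A i j * z j := by
        simp [Matrix.mulVec, dotProduct]
    _ = ∑ j, A i j * (y j - z j) := by
        rw [← Finset.sum_sub_distrib]
        exact Finset.sum_congr rfl fun j _ => by ring
  have hedge : ∀ j, A i j ≠ 0 → deltaDist r B z j ≤ deltaDist r B z i := by
    intro j hj
    apply deltaDist_mono
    by_contra hc
    exact hj (by rw [hAdef, adjMat_apply, if_neg hc])
  constructor
  · intro hpos
    have habs : |∑ j, A i j * (y j - z j)| ≤ ∑ j, A i j * |y j - z j| := by
      refine (Finset.abs_sum_le_sum_abs _ _).trans (le_of_eq ?_)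
      exact Finset.sum_congr rfl fun j _ => by
        rw [abs_mul, abs_of_nonneg (adjMat_nonneg B z i j)]
    have hlt : ∑ j, A i j * |y j - z j| < ∑ j, A i j * deltaDist r B z i := by
      apply Finset.sum_lt_sum
      · intro j _
        by_cases hj : A i j = 0
        · rw [hj, zero_mul, zero_mul]
        · exact mul_le_mul_of_nonneg_left (le_trans (hy.dist_le j) (hedge j hj))
            (adjMat_nonneg B z i j)
      · exact ⟨i, Finset.mem_univ i, mul_lt_mul_of_pos_left ((hy i).1 hpos)
          (adjMat_diag_pos hBd z i)⟩
    have hsum : ∑ j, A i j * deltaDist r B z i = deltaDist r B z i := by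
      rw [← Finset.sum_mul, adjMat_row_sum hBd z i, one_mul]
    rw [hdiff]
    linarith
  · intro h0
    have hterm : ∀ j, A i j * (y j - z j) = 0 := by
      intro j
      by_cases hj : A i j = 0
      · rw [hj, zero_mul]
      · have hdj0 : deltaDist r B z j = 0 :=
          le_antisymm (h0 ▸ hedge j hj) (deltaDist_nonneg r B z j)
        rw [(hy j).2 hdj0, sub_self, mul_zero]
    have : (A *ᵥ y) i - z i = 0 := by
      rw [hdiff]
      exact Finset.sum_eq_zero fun j _ => hterm j
    linarith

section Conv

variable {n : ℕ}

lemma pow_entry_nonneg {A : Matrix (Fin n) (Fin n) ℝ} (h0 : ∀ i j, 0 ≤ A i j) :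
    ∀ t i j, 0 ≤ (A ^ t) i j := by
  intro t
  induction t with
  | zero => intro i j; rw [pow_zero]; by_cases h : i = j <;> simp [Matrix.one_apply, h]
  | succ t ih =>
    intro i j
    rw [pow_succ, Matrix.mul_apply]
    exact Finset.sum_nonneg fun k _ => mul_nonneg (ih i k) (h0 k j)

lemma pow_row_sum {A : Matrix (Fin n) (Fin n) ℝ} (hrow : ∀ i, ∑ j, A i j = 1) :
    ∀ t i, ∑ j, (A ^ t) i j = 1 := by
  intro t
  induction t with
  | zero =>
    intro i
    rw [pow_zero]
    simp [Matrix.one_apply]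
  | succ t ih =>
    intro i
    rw [show ∑ j, (A ^ (t+1)) i j = ∑ j, ∑ k, (A ^ t) i k * A k j from
      Finset.sum_congr rfl fun j _ => by rw [pow_succ, Matrix.mul_apply]]
    rw [Finset.sum_comm]
    calc ∑ k, ∑ j, (A ^ t) i k * A k j = ∑ k, (A ^ t) i k * ∑ j, A k j := by
          exact Finset.sum_congr rfl fun k _ => by rw [Finset.mul_sum]
    _ = ∑ k, (A ^ t) i k := by
          exact Finset.sum_congr rfl fun k _ => by rw [hrow k, mul_one]
    _ = 1 := ih i

lemma pow_entry_le_one {A : Matrix (Fin n) (Fin n) ℝ} (h0 : ∀ i j, 0 ≤ A i j)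
    (hrow : ∀ i, ∑ j, A i j = 1) (t : ℕ) (i j : Fin n) : (A ^ t) i j ≤ 1 := by
  rw [← pow_row_sum hrow t i]
  exact Finset.single_le_sum (fun k _ => pow_entry_nonneg h0 t i k) (Finset.mem_univ j)

/-- Main convergence theorem for row-stochastic matrices with positive diagonal. -/
theorem stoch_conv (A : Matrix (Fin n) (Fin n) ℝ) (h0 : ∀ i j, 0 ≤ A i j)
    (hrow : ∀ i, ∑ j, A i j = 1) (hdiag : ∀ i, 0 < A i i) (v : Fin n → ℝ) :
    ∃ L : Fin n → ℝ, ∀ i, Tendsto (fun t => ((A ^ t) *ᵥ v) i) atTop (nhds (L i)) := by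
  classical
  set Ac : Matrix (Fin n) (Fin n) ℂ := A.map Complex.ofReal with hAc
  have hAcpow : ∀ t, Ac ^ t = (A ^ t).map Complex.ofReal := by
    intro t
    induction t with
    | zero => simp
    | succ t ih =>
      rw [pow_succ, pow_succ, ih, hAc]
      ext i j
      simp only [Matrix.map_apply, Matrix.mul_apply]
      norm_cast
  have hbound : ∀ (w : Fin n → ℂ) (t : ℕ) (i : Fin n),
      ‖((Ac ^ t) *ᵥ w) i‖ ≤ ∑ j, ‖w j‖ := by
    intro w t i
    rw [hAcpow]
    have : ((A ^ t).map Complex.ofReal *ᵥ w) i = ∑ j, ((A ^ t) i j : ℂ) * w j := by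
      simp [Matrix.mulVec, dotProduct, Matrix.map_apply]
    rw [this]
    refine (norm_sum_le _ _).trans ?_
    apply Finset.sum_le_sum
    intro j _
    rw [norm_mul, Complex.norm_real, Real.norm_eq_abs,
      abs_of_nonneg (pow_entry_nonneg h0 t i j)]
    calc (A ^ t) i j * ‖w j‖ ≤ 1 * ‖w j‖ :=
          mul_le_mul_of_nonneg_right (pow_entry_le_one h0 hrow t i j) (norm_nonneg _)
    _ = ‖w j‖ := one_mul _
  set f : Module.End ℂ (Fin n → ℂ) := Matrix.mulVecLin Ac with hf
  have hfpow : ∀ (t : ℕ) (w : Fin n → ℂ), (f ^ t) w = (Ac ^ t) *ᵥ w := by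
    intro t
    induction t with
    | zero => intro w; simp
    | succ t ih =>
      intro w
      rw [pow_succ, Module.End.mul_apply, hf, Matrix.mulVecLin_apply, ih,
        Matrix.mulVec_mulVec, ← pow_succ]
  set S : Submodule ℂ (Fin n → ℂ) :=
    { carrier := {w | ∃ L : Fin n → ℂ, Tendsto (fun t => (Ac ^ t) *ᵥ w) atTop (nhds L)}
      add_mem' := by
        rintro a b ⟨La, ha⟩ ⟨Lb, hb⟩
        exact ⟨La + Lb, by simpa [Matrix.mulVec_add] using ha.add hb⟩
      zero_mem' := ⟨0, by simpa [Matrix.mulVec_zero] using tendsto_const_nhds⟩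
      smul_mem' := by
        rintro c a ⟨La, ha⟩
        exact ⟨c • La, by simpa [Matrix.mulVec_smul] using ha.const_smul c⟩ } with hS
  have hmax : ∀ μ : ℂ, f.maxGenEigenspace μ ≤ S := by
    intro μ w hw
    rw [Module.End.mem_maxGenEigenspace] at hw
    obtain ⟨k, hk⟩ := hw
    by_cases hμ1 : μ = 1
    · -- eigenvalue 1 : semisimple by power boundedness
      subst hμ1
      rw [one_smul] at hk
      have rank2 : ∀ u : Fin n → ℂ, (((f - 1) ^ 2 : Module.End ℂ (Fin n → ℂ))) u = 0 → (f - 1) u = 0 := by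
        intro u hu
        by_contra hne
        set wv := (f - 1) u with hwv
        have hfwv : f wv = wv := by
          have h2 : (((f - 1) ^ 2 : Module.End ℂ (Fin n → ℂ))) u = (f - 1) ((f - 1) u) := by
            rw [pow_two, Module.End.mul_apply]
          rw [h2, ← hwv] at hu
          have h3 : f wv - wv = 0 := by
            simpa [LinearMap.sub_apply, Module.End.one_apply] using hu
          exact sub_eq_zero.mp h3
        have hfu : f u = u + wv := by
          have : f u - u = wv := by
            rw [hwv]; simp [LinearMap.sub_apply, Module.End.one_apply]
          linear_combination this
        have hiter : ∀ t : ℕ, (f ^ t) u = u + (t : ℂ) • wv := by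
          intro t
          induction t with
          | zero => simp
          | succ t ih =>
            rw [pow_succ', Module.End.mul_apply, ih, map_add, _root_.map_smul, hfwv, hfu]
            push_cast
            rw [add_smul, one_smul]
            abel
        obtain ⟨i, hi⟩ : ∃ i, wv i ≠ 0 := Function.ne_iff.mp hne
        set C := ∑ j, ‖u j‖ with hC
        obtain ⟨t, ht⟩ := exists_nat_gt ((C + ‖u i‖) / ‖wv i‖)
        have hb := hbound u t i
        rw [← hfpow t u, hiter t] at hb
        have hnormi : ‖u i + (t : ℂ) * wv i‖ ≤ C := by
          simpa [Pi.add_apply, Pi.smul_apply, smul_eq_mul] using hb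
        have hlow : (t : ℝ) * ‖wv i‖ - ‖u i‖ ≤ ‖u i + (t : ℂ) * wv i‖ := by
          have h1 : ‖(t : ℂ) * wv i‖ ≤ ‖u i + (t : ℂ) * wv i‖ + ‖u i‖ := by
            calc ‖(t : ℂ) * wv i‖ = ‖(u i + (t : ℂ) * wv i) - u i‖ := by ring_nf
            _ ≤ ‖u i + (t : ℂ) * wv i‖ + ‖u i‖ := norm_sub_le _ _
          have h2 : ‖(t : ℂ) * wv i‖ = (t : ℝ) * ‖wv i‖ := by
            rw [norm_mul, Complex.norm_natCast]
          linarith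
        have hwpos : 0 < ‖wv i‖ := norm_pos_iff.mpr hi
        rw [div_lt_iff₀ hwpos] at ht
        linarith
      have kerl : ∀ (m : ℕ) (u : Fin n → ℂ), ((f - 1) ^ m) u = 0 → (f - 1) u = 0 := by
        intro m
        induction m with
        | zero =>
          intro u hu
          simp only [pow_zero, Module.End.one_apply] at hu
          simp [hu]
        | succ m ih =>
          intro u hu
          have h1 : ((f - 1) ^ m) ((f - 1) u) = 0 := by
            rw [← Module.End.mul_apply, ← pow_succ]
            exact hu
          have h2 := ih _ h1
          apply rank2
          rw [pow_two, Module.End.mul_apply]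
          exact h2
      have hfw : f w = w := by
        have h3 := kerl k w hk
        have h4 : f w - w = 0 := by
          simpa [LinearMap.sub_apply, Module.End.one_apply] using h3
        exact sub_eq_zero.mp h4
      have hconst : ∀ t, (Ac ^ t) *ᵥ w = w := by
        intro t
        rw [← hfpow]
        induction t with
        | zero => simp
        | succ t ih => rw [pow_succ', Module.End.mul_apply, ih, hfw]
      exact ⟨w, by simp only [hconst]; exact tendsto_const_nhds⟩
    · by_cases hw0 : w = 0
      · rw [hw0]; exact S.zero_mem
      -- μ is an eigenvalue with modulus < 1
      have hgen : f.HasGenEigenvalue μ k := by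
        apply (Submodule.ne_bot_iff _).mpr
        refine ⟨w, ?_, hw0⟩
        rw [Module.End.mem_genEigenspace_nat, LinearMap.mem_ker]
        exact hk
      obtain ⟨ev, hev⟩ :=
        (Module.End.hasEigenvalue_of_hasGenEigenvalue hgen).exists_hasEigenvector
      have hev0 : ev ≠ 0 := hev.2
      have hfev : f ev = μ • ev := Module.End.mem_eigenspace_iff.mp hev.1
      obtain ⟨j0, hj0⟩ := Function.ne_iff.mp hev0
      obtain ⟨i, -, hi⟩ := Finset.exists_max_image (Finset.univ : Finset (Fin n))
        (fun j => ‖ev j‖) ⟨j0, Finset.mem_univ _⟩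
      have hvi : 0 < ‖ev i‖ :=
        lt_of_lt_of_le (norm_pos_iff.mpr hj0) (hi j0 (Finset.mem_univ _))
      have hrowEq : ∑ j, ((A i j : ℂ)) * ev j = μ * ev i := by
        have h5 : f ev i = (μ • ev) i := by rw [hfev]
        rw [hf, Matrix.mulVecLin_apply] at h5
        have h6 : (Ac *ᵥ ev) i = ∑ j, ((A i j : ℂ)) * ev j := by
          simp [hAc, Matrix.mulVec, dotProduct, Matrix.map_apply]
        rw [h6] at h5
        simpa [Pi.smul_apply, smul_eq_mul] using h5
      have hsplit : (μ - (A i i : ℂ)) * ev i = ∑ j ∈ Finset.univ.erase i, ((A i j : ℂ)) * ev j := by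
        have h7 := hrowEq
        rw [← Finset.add_sum_erase _ _ (Finset.mem_univ i)] at h7
        linear_combination -h7
      have hsumerase : ∑ j ∈ Finset.univ.erase i, A i j = 1 - A i i := by
        have h8 := hrow i
        rw [← Finset.add_sum_erase _ _ (Finset.mem_univ i)] at h8
        linarith
      have hger : ‖μ - (A i i : ℂ)‖ * ‖ev i‖ ≤ (1 - A i i) * ‖ev i‖ := by
        calc ‖μ - (A i i : ℂ)‖ * ‖ev i‖ = ‖(μ - (A i i : ℂ)) * ev i‖ := (norm_mul _ _).symm
        _ = ‖∑ j ∈ Finset.univ.erase i, ((A i j : ℂ)) * ev j‖ := by rw [hsplit]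
        _ ≤ ∑ j ∈ Finset.univ.erase i, ‖((A i j : ℂ)) * ev j‖ := norm_sum_le _ _
        _ ≤ ∑ j ∈ Finset.univ.erase i, A i j * ‖ev i‖ := by
            apply Finset.sum_le_sum
            intro j _
            rw [norm_mul, Complex.norm_real, Real.norm_eq_abs, abs_of_nonneg (h0 i j)]
            exact mul_le_mul_of_nonneg_left (hi j (Finset.mem_univ _)) (h0 i j)
        _ = (1 - A i i) * ‖ev i‖ := by rw [← Finset.sum_mul, hsumerase]
      have hger2 : ‖μ - (A i i : ℂ)‖ ≤ 1 - A i i :=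
        le_of_mul_le_mul_right hger hvi
      have hAle1 : A i i ≤ 1 := by
        have h9 := hrow i
        have h10 := Finset.single_le_sum (fun k _ => h0 i k) (Finset.mem_univ i)
        linarith
      have habs : ‖μ‖ < 1 := by
        have hsq : (μ.re - A i i) ^ 2 + μ.im ^ 2 ≤ (1 - A i i) ^ 2 := by
          have h1 : ‖μ - ((A i i : ℝ) : ℂ)‖ ^ 2 ≤ (1 - A i i) ^ 2 := by
            nlinarith [norm_nonneg (μ - ((A i i : ℝ) : ℂ))]
          have h2 : ‖μ - ((A i i : ℝ) : ℂ)‖ ^ 2 = (μ.re - A i i) ^ 2 + μ.im ^ 2 := by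
            rw [Complex.sq_norm, Complex.normSq_apply]
            simp only [Complex.sub_re, Complex.sub_im, Complex.ofReal_re, Complex.ofReal_im]
            ring
          linarith [h2 ▸ h1]
        have hb1 : μ.re ≠ 1 := by
          intro hb
          apply hμ1
          have hc0 : μ.im = 0 := by nlinarith
          apply Complex.ext
          · simpa using hb
          · simpa using hc0
        have hble : μ.re ≤ 1 := by nlinarith [hdiag i, sq_nonneg μ.im]
        have hblt : μ.re < 1 := lt_of_le_of_ne hble hb1
        have hn2 : ‖μ‖ ^ 2 = μ.re ^ 2 + μ.im ^ 2 := by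
          rw [Complex.sq_norm, Complex.normSq_apply]
          ring
        nlinarith [norm_nonneg μ, hdiag i]
      -- convergence to zero on the generalized eigenspace
      by_cases hμ0 : μ = 0
      · -- `f^k w = 0`, so the sequence is eventually `0`
        subst hμ0
        have hk0 : (f ^ k) w = 0 := by simpa using hk
        refine ⟨0, ?_⟩
        have hevc : (fun _ : ℕ => (0 : Fin n → ℂ)) =ᶠ[atTop] fun t => (Ac ^ t) *ᵥ w := by
          filter_upwards [eventually_ge_atTop k] with t ht
          rw [← hfpow]
          have hsplit2 : f ^ t = f ^ (t - k) * f ^ k := by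
            rw [← pow_add, Nat.sub_add_cancel ht]
          rw [hsplit2, Module.End.mul_apply, hk0, map_zero]
      
        exact Tendsto.congr' hevc tendsto_const_nhds
      · -- `0 < ‖μ‖ < 1` : binomial expansion tends to `0`
        set N := f - μ • (1 : Module.End ℂ (Fin n → ℂ)) with hN
        have hμn : ‖μ‖ ≠ 0 := fun h => hμ0 (norm_eq_zero.mp h)
        have hcomm : Commute N (μ • (1 : Module.End ℂ (Fin n → ℂ))) :=
          (Commute.one_right N).smul_right μ
        have hadd : N + μ • (1 : Module.End ℂ (Fin n → ℂ)) = f := by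
          rw [hN, sub_add_cancel]
        have hexp : ∀ t, k ≤ t → (f ^ t) w
            = ∑ m ∈ Finset.range k, ((t.choose m : ℂ) * μ ^ (t - m)) • ((N ^ m) w) := by
          intro t ht
          have h1 : f ^ t = ∑ m ∈ Finset.range (t + 1),
              N ^ m * (μ • (1 : Module.End ℂ (Fin n → ℂ))) ^ (t - m) * (t.choose m : ℕ) := by
            rw [← hadd, Commute.add_pow hcomm]
          have h2 : (f ^ t) w = ∑ m ∈ Finset.range (t + 1),
              ((t.choose m : ℂ) * μ ^ (t - m)) • ((N ^ m) w) := by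
            rw [h1, LinearMap.sum_apply]
            apply Finset.sum_congr rfl
            intro m hm
            rw [Module.End.mul_apply, Module.End.mul_apply]
            have hc : ((t.choose m : ℕ) : Module.End ℂ (Fin n → ℂ)) w = (t.choose m : ℂ) • w := by
              rw [Module.End.natCast_apply, Nat.cast_smul_eq_nsmul]
            rw [hc]
            rw [smul_pow, one_pow, LinearMap.smul_apply, Module.End.one_apply]
            rw [_root_.map_smul, _root_.map_smul]
            rw [smul_smul, mul_comm]
          rw [h2]
          symm
          apply Finset.sum_subset
          · intro m hm
            rw [Finset.mem_range] at hm ⊢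
            omega
          · intro m hm hmk
            rw [Finset.mem_range] at hm
            rw [Finset.mem_range, not_lt] at hmk
            have hzero : (N ^ m) w = 0 := by
              have : N ^ m = N ^ (m - k) * N ^ k := by
                rw [← pow_add, Nat.sub_add_cancel hmk]
              have hNk : (N ^ k) w = 0 := by rw [hN]; exact hk
              rw [this, Module.End.mul_apply, hNk, map_zero]
            rw [hzero, smul_zero]
        have hterm : ∀ m ∈ Finset.range k,
            Tendsto (fun t => ((t.choose m : ℂ) * μ ^ (t - m)) • ((N ^ m) w)) atTop
              (nhds 0) := by
          intro m _
          have hsc : Tendsto (fun t : ℕ => (t.choose m : ℂ) * μ ^ (t - m)) atTop (nhds 0) := by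
            apply squeeze_zero_norm' (a := fun t : ℕ => ‖μ‖⁻¹ ^ m * ((t : ℝ) ^ m * ‖μ‖ ^ t))
            · filter_upwards [eventually_ge_atTop m] with t ht
              rw [norm_mul, norm_pow, Complex.norm_natCast]
              calc (t.choose m : ℝ) * ‖μ‖ ^ (t - m)
                  ≤ (t : ℝ) ^ m * ‖μ‖ ^ (t - m) := by
                    apply mul_le_mul_of_nonneg_right _ (pow_nonneg (norm_nonneg μ) _)
                    exact_mod_cast Nat.choose_le_pow t m
                _ = (‖μ‖⁻¹ ^ m) * ((t : ℝ) ^ m * ‖μ‖ ^ t) := by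
                    rw [pow_sub₀ _ hμn ht]
                    field_simp
                    rw [_root_.one_div_pow, mul_assoc, mul_one_div_cancel (pow_ne_zero _ hμn), mul_one]
            · have hgeo := tendsto_pow_const_mul_const_pow_of_lt_one m (norm_nonneg μ) habs
              simpa using hgeo.const_mul (‖μ‖⁻¹ ^ m)
          simpa using hsc.smul_const ((N ^ m) w)
        refine ⟨0, ?_⟩
        have hsum : Tendsto (fun t => ∑ m ∈ Finset.range k,
            ((t.choose m : ℂ) * μ ^ (t - m)) • ((N ^ m) w)) atTop (nhds 0) := by
          have := tendsto_finset_sum (Finset.range k) hterm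
          simpa using this
        apply Tendsto.congr' _ hsum
        filter_upwards [eventually_ge_atTop k] with t ht
        rw [← hfpow, hexp t ht]
  have htop : (⊤ : Submodule ℂ (Fin n → ℂ)) ≤ S := by
    rw [← Module.End.iSup_maxGenEigenspace_eq_top f]
    exact iSup_le hmax
  obtain ⟨L, hL⟩ := htop (Submodule.mem_top (x := fun j => (v j : ℂ)))
  refine ⟨fun i => (L i).re, fun i => ?_⟩
  have h1 : Tendsto (fun t => ((Ac ^ t) *ᵥ fun j => (v j : ℂ)) i) atTop (nhds (L i)) :=
    ((continuous_apply i).tendsto L).comp hL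
  have h2 : ∀ t, ((Ac ^ t) *ᵥ fun j => (v j : ℂ)) i = ((((A ^ t) *ᵥ v) i : ℝ) : ℂ) := by
    intro t
    rw [hAcpow]
    simp only [Matrix.mulVec, dotProduct, Matrix.map_apply]
    norm_cast
  have h3 : Tendsto (fun t => ((((A ^ t) *ᵥ v) i : ℝ) : ℂ)) atTop (nhds (L i)) :=
    h1.congr fun t => h2 t
  have h4 := (Complex.continuous_re.tendsto (L i)).comp h3
  simpa [Function.comp_def] using h4

end Conv


/-- Under the hypotheses of the invariance theorem (`z` an
equilibrium and `x 0` in its invariant equi-topology neighborhood), the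
trajectory `x (t+1) = A(x t) (x t)` converges to
`fvct (x 0) = lim A(x 0)^t (x 0)`. -/
theorem stmt10 {n : ℕ} (r : Fin n → ℝ) (B : Fin n → Fin n → ℝ) (z : Fin n → ℝ)
    (hr : ∀ i, 0 < r i)
    (hB : (∀ i j, B i j = r i) ∨ (∀ i j, B i j = r j))
    (heq : adjMat B z *ᵥ z = z)
    (x : ℕ → Fin n → ℝ)
    (hstep : ∀ t, x (t + 1) = adjMat B (x t) *ᵥ x t)
    (hx0 : ∀ i, (0 < deltaDist r B z i → |x 0 i - z i| < deltaDist r B z i) ∧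
                (deltaDist r B z i = 0 → x 0 i = z i)) :
    ∃ f : Fin n → ℝ,
      (∀ i, Tendsto (fun t => ((adjMat B (x 0) ^ t) *ᵥ x 0) i) atTop (nhds (f i))) ∧
      (∀ i, Tendsto (fun t => x t i) atTop (nhds (f i))) := by
  have hBd : ∀ i, 0 < B i i := by
    rcases hB with h | h <;> intro i <;> rw [h i i] <;> exact hr i
  have hP0 : Pnbhd r B z (x 0) := hx0
  have hPt : ∀ t, Pnbhd r B z (x t) := by
    intro t
    induction t with
    | zero => exact hP0
    | succ t ih => rw [hstep t]; exact Pnbhd.step hr hB heq ih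
  have hAt : ∀ t, adjMat B (x t) = adjMat B z := fun t =>
    adjMat_congr (graph_eq hB (hPt t))
  have hxt : ∀ t, x t = (adjMat B z ^ t) *ᵥ x 0 := by
    intro t
    induction t with
    | zero => simp
    | succ t ih => rw [hstep t, hAt t, ih, Matrix.mulVec_mulVec, ← pow_succ']
  obtain ⟨L, hL⟩ := stoch_conv (adjMat B z) (fun i j => adjMat_nonneg B z i j)
    (adjMat_row_sum hBd z) (adjMat_diag_pos hBd z) (x 0)
  refine ⟨L, fun i => ?_, fun i => ?_⟩
  · simp only [hAt 0]
    exact hL i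
  · have hfn : (fun t => x t i) = fun t => ((adjMat B z ^ t) *ᵥ x 0) i :=
    funext fun t => by rw [hxt t]
    rw [hfn]
    exact hL i
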